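/- The pair of functions π_A(A,φ) = -(d(d-1)/(κ²l)) e^{dA} √(1 + k e^{-2A} + μ e^{-(d+1)A}) + ((d-1)/2) φ π_φ and π_φ(A,φ) = e^{dA} √((d(d-1)/(κ²l²)) μ e^{-(d+1)A} + k ((d-1)/(2l))² φ² e^{-2A} + λ φ^{2(d+1)/(d-1)}) satisfies the integrability condition ∂π_A/∂φ = ∂π_φ/∂A on the domain where both square roots have positive arguments. -/

import Mathlib

open Real

/-- The pair
π_φ(A,φ) = e^{dA}√((d(d-1)/(κ²l²))μe^{-(d+1)A} + k((d-1)/(2l))²φ²e^{-2A} + λφ^{2(d+1)/(d-1)}),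
π_A(A,φ) = -(d(d-1)/(κ²l)) e^{dA}√(1+ke^{-2A}+μe^{-(d+1)A}) + ((d-1)/2)φπ_φ(A,φ)
satisfies the integrability condition ∂π_A/∂φ = ∂π_φ/∂A on the domain where both
square-root arguments are positive (so the momenta derive from a complete integral
S(A,φ) of the minisuperspace Hamilton–Jacobi equation). -/
theorem stmt11 (d κ l lam μ k : ℝ) (hd : 1 < d) (hκ : 0 < κ) (hl : 0 < l)
    (hlam : 0 < lam) (hk : k = 0 ∨ k = 1 ∨ k = -1)
    (πA πφ : ℝ → ℝ → ℝ)
    (hπφ : ∀ A φ : ℝ, πφ A φ = Real.exp (d * A) *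
      Real.sqrt ((d * (d - 1) / (κ ^ 2 * l ^ 2)) * μ * Real.exp (-(d + 1) * A) +
        k * ((d - 1) / (2 * l)) ^ 2 * φ ^ 2 * Real.exp (-2 * A) +
        lam * φ ^ (2 * (d + 1) / (d - 1))))
    (hπA : ∀ A φ : ℝ, πA A φ = -(d * (d - 1) / (κ ^ 2 * l)) * Real.exp (d * A) *
      Real.sqrt (1 + k * Real.exp (-2 * A) + μ * Real.exp (-(d + 1) * A)) +
      ((d - 1) / 2) * φ * πφ A φ) :
    ∀ A φ : ℝ, 0 < φ →
      0 < 1 + k * Real.exp (-2 * A) + μ * Real.exp (-(d + 1) * A) →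
      0 < (d * (d - 1) / (κ ^ 2 * l ^ 2)) * μ * Real.exp (-(d + 1) * A) +
          k * ((d - 1) / (2 * l)) ^ 2 * φ ^ 2 * Real.exp (-2 * A) +
          lam * φ ^ (2 * (d + 1) / (d - 1)) →
      deriv (fun φ' => πA A φ') φ = deriv (fun A' => πφ A' φ) A := by
  intro A φ hφ hR hQ
  simp only [hπA, hπφ]
  set a : ℝ := d * (d - 1) / (κ ^ 2 * l ^ 2) * μ with ha
  set b : ℝ := k * ((d - 1) / (2 * l)) ^ 2 with hb
  set p : ℝ := 2 * (d + 1) / (d - 1) with hp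
  have hg : HasDerivAt (fun φ' : ℝ => a * Real.exp (-(d + 1) * A) +
      b * φ' ^ 2 * Real.exp (-2 * A) + lam * φ' ^ p) _ φ :=
    ((hasDerivAt_const φ (a * Real.exp (-(d + 1) * A))).add
      (((hasDerivAt_pow 2 φ).const_mul b).mul_const (Real.exp (-2 * A)))).add
      ((Real.hasDerivAt_rpow_const (Or.inl hφ.ne')).const_mul lam)
  have hgs := hg.sqrt hQ.ne'
  have h3 : HasDerivAt (fun φ' : ℝ => (d - 1) / 2 * φ' * (Real.exp (d * A) *
      Real.sqrt (a * Real.exp (-(d + 1) * A) + b * φ' ^ 2 * Real.exp (-2 * A) +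
        lam * φ' ^ p))) _ φ :=
    ((hasDerivAt_id φ).const_mul ((d - 1) / 2)).mul (hgs.const_mul (Real.exp (d * A)))
  have hL : HasDerivAt (fun φ' : ℝ =>
      -(d * (d - 1) / (κ ^ 2 * l)) * Real.exp (d * A) *
        Real.sqrt (1 + k * Real.exp (-2 * A) + μ * Real.exp (-(d + 1) * A)) +
      (d - 1) / 2 * φ' * (Real.exp (d * A) *
        Real.sqrt (a * Real.exp (-(d + 1) * A) + b * φ' ^ 2 * Real.exp (-2 * A) +
          lam * φ' ^ p))) _ φ :=
    (hasDerivAt_const φ (-(d * (d - 1) / (κ ^ 2 * l)) * Real.exp (d * A) *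
      Real.sqrt (1 + k * Real.exp (-2 * A) + μ * Real.exp (-(d + 1) * A)))).add h3
  have hq : HasDerivAt (fun A' : ℝ => a * Real.exp (-(d + 1) * A') +
      b * φ ^ 2 * Real.exp (-2 * A') + lam * φ ^ p) _ A :=
    ((((hasDerivAt_id A).const_mul (-(d + 1))).exp.const_mul a).add
      (((hasDerivAt_id A).const_mul (-2 : ℝ)).exp.const_mul (b * φ ^ 2))).add
      (hasDerivAt_const A (lam * φ ^ p))
  have hE' : HasDerivAt (fun A' : ℝ => Real.exp (d * A')) _ A :=
    ((hasDerivAt_id A).const_mul d).exp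
  have hRd : HasDerivAt (fun A' : ℝ => Real.exp (d * A') *
      Real.sqrt (a * Real.exp (-(d + 1) * A') + b * φ ^ 2 * Real.exp (-2 * A') +
        lam * φ ^ p)) _ A := hE'.mul (hq.sqrt hQ.ne')
  rw [hL.deriv, hRd.deriv]
  have hd1 : d - 1 ≠ 0 := by nlinarith
  have hpd : p * (d - 1) = 2 * (d + 1) := by rw [hp]; field_simp
  have hφp : φ ^ (p - 1) * φ = φ ^ p := by
    rw [Real.rpow_sub hφ, Real.rpow_one, div_mul_cancel₀ _ hφ.ne']
  set s : ℝ := Real.sqrt (a * Real.exp (-(d + 1) * A) + b * φ ^ 2 * Real.exp (-2 * A) + lam * φ ^ p) with hs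
  have hspos : 0 < s := Real.sqrt_pos.mpr hQ
  have hs2 : s * s = a * Real.exp (-(d + 1) * A) + b * φ ^ 2 * Real.exp (-2 * A) + lam * φ ^ p :=
    Real.mul_self_sqrt hQ.le
  simp only [id_eq]
  set E : ℝ := Real.exp (d * A) with hE
  set e1 : ℝ := Real.exp (-(d + 1) * A) with he1
  set e2 : ℝ := Real.exp (-2 * A) with he2
  field_simp
  linear_combination (-2 * (d + 1) * E) * hs2 + ((d - 1) * lam * p * E) * hφp +
    (lam * φ ^ p * E) * hpd
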